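/- Let μ be a Radon measure of n-polynomial growth on ℝ^d, and fix balls B_R ⊂ B_Q, cubes T ⊂ S with: r(B_Q) comparable to ℓ(S) and B_Q ∩ S ≠ ∅; ℓ(T) comparable to r(B_R) and T ∩ B_R ≠ ∅; and T ⊂ S. Then δ(B_R, B_Q) ≤ C(1 + δ(T,S)), where δ(A,B) = 1 + ∫_{cB \ cA} |x_A − y|^{−n} dμ (for a fixed dilation constant c ≥ 2) and C depends only on the comparability constants, n, d, c. -/

import Mathlib

open MeasureTheory Metric
open scoped ENNReal

/-- The axis-parallel closed cube with center `c` and side length `ℓ`. -/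
def cube {d : ℕ} (c : EuclideanSpace ℝ (Fin d)) (ℓ : ℝ) : Set (EuclideanSpace ℝ (Fin d)) :=
  {y | ∀ i, |y i - c i| ≤ ℓ / 2}

/-- `δ(A,B) = 1 + ∫_{cB \ cA} |x_A − y|^{−n} dμ(y)` for balls `A ⊆ B`, with dilation
constant `c`. -/
noncomputable def ballDelta {d : ℕ} (μ : Measure (EuclideanSpace ℝ (Fin d))) (n c : ℝ)
    (xA : EuclideanSpace ℝ (Fin d)) (rA : ℝ)
    (xB : EuclideanSpace ℝ (Fin d)) (rB : ℝ) : ℝ≥0∞ :=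
  1 + ∫⁻ y in closedBall xB (c * rB) \ closedBall xA (c * rA),
        ENNReal.ofReal (1 / dist xA y ^ n) ∂μ

/-- `δ(T,S) = 1 + ∫_{cS \ cT} |x_T − y|^{−n} dμ(y)` for cubes `T ⊆ S`, with dilation
constant `c`. -/
noncomputable def cubeDelta {d : ℕ} (μ : Measure (EuclideanSpace ℝ (Fin d))) (n c : ℝ)
    (cT : EuclideanSpace ℝ (Fin d)) (ℓT : ℝ)
    (cS : EuclideanSpace ℝ (Fin d)) (ℓS : ℝ) : ℝ≥0∞ :=
  1 + ∫⁻ y in cube cS (c * ℓS) \ cube cT (c * ℓT),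
        ENNReal.ofReal (1 / dist cT y ^ n) ∂μ

lemma coord_le_dist {d : ℕ} (x y : EuclideanSpace ℝ (Fin d)) (i : Fin d) :
    |x i - y i| ≤ dist x y := by
  rw [EuclideanSpace.dist_eq]
  have h1 : |x i - y i| = Real.sqrt (dist (x i) (y i) ^ 2) := by
    rw [Real.sqrt_sq_eq_abs, Real.dist_eq, abs_abs]
  rw [h1]
  apply Real.sqrt_le_sqrt
  exact Finset.single_le_sum (f := fun j => dist (x j) (y j) ^ 2)
    (fun j _ => sq_nonneg _) (Finset.mem_univ i)

lemma dist_le_of_mem_cube {d : ℕ} {c y : EuclideanSpace ℝ (Fin d)} {ℓ : ℝ}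
    (hy : y ∈ cube c ℓ) (hl : 0 ≤ ℓ) : dist y c ≤ Real.sqrt d * (ℓ / 2) := by
  rw [EuclideanSpace.dist_eq]
  have : ∑ i, dist (y i) (c i) ^ 2 ≤ (d : ℝ) * (ℓ / 2) ^ 2 := by
    calc ∑ i, dist (y i) (c i) ^ 2 ≤ ∑ _i : Fin d, (ℓ / 2) ^ 2 := by
          apply Finset.sum_le_sum
          intro i _
          have := hy i
          rw [Real.dist_eq]
          nlinarith [abs_nonneg (y i - c i)]
      _ = (d : ℝ) * (ℓ / 2) ^ 2 := by simp [Finset.sum_const, nsmul_eq_mul]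
  calc Real.sqrt (∑ i, dist (y i) (c i) ^ 2) ≤ Real.sqrt ((d : ℝ) * (ℓ / 2) ^ 2) :=
        Real.sqrt_le_sqrt this
    _ = Real.sqrt d * (ℓ / 2) := by
        rw [Real.sqrt_mul (Nat.cast_nonneg d), Real.sqrt_sq (by linarith)]

lemma measurableSet_cube {d : ℕ} (c : EuclideanSpace ℝ (Fin d)) (ℓ : ℝ) :
    MeasurableSet (cube c ℓ) := by
  have : cube c ℓ = ⋂ i, {y : EuclideanSpace ℝ (Fin d) | |y i - c i| ≤ ℓ / 2} := by
    ext y; simp [cube, Set.mem_iInter]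
  rw [this]
  apply MeasurableSet.iInter
  intro i
  have hcont : Continuous fun y : EuclideanSpace ℝ (Fin d) => |y i - c i| :=
    ((EuclideanSpace.proj i).continuous.sub continuous_const).abs
  exact measurableSet_le hcont.measurable measurable_const

lemma annulus_bound {d : ℕ} (μ : Measure (EuclideanSpace ℝ (Fin d))) {n : ℝ} (hn : 0 < n)
    {x : EuclideanSpace ℝ (Fin d)}
    (hg : ∀ r > 0, μ (ball x r) ≤ ENNReal.ofReal (r ^ n))
    {A : Set (EuclideanSpace ℝ (Fin d))} (hA : MeasurableSet A) {a ρ : ℝ}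
    (ha : 0 < a) (hρ : 0 < ρ) (hsub : A ⊆ ball x ρ) (hd : ∀ y ∈ A, a ≤ dist x y) :
    ∫⁻ y in A, ENNReal.ofReal (1 / dist x y ^ n) ∂μ ≤ ENNReal.ofReal ((ρ / a) ^ n) := by
  calc ∫⁻ y in A, ENNReal.ofReal (1 / dist x y ^ n) ∂μ
      ≤ ∫⁻ _y in A, ENNReal.ofReal (1 / a ^ n) ∂μ := by
        apply setLIntegral_mono' hA
        intro y hy
        apply ENNReal.ofReal_le_ofReal
        apply one_div_le_one_div_of_le (Real.rpow_pos_of_pos ha n)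
        exact Real.rpow_le_rpow ha.le (hd y hy) hn.le
    _ = ENNReal.ofReal (1 / a ^ n) * μ A := setLIntegral_const _ _
    _ ≤ ENNReal.ofReal (1 / a ^ n) * ENNReal.ofReal (ρ ^ n) := by
        gcongr
        exact le_trans (measure_mono hsub) (hg ρ hρ)
    _ = ENNReal.ofReal ((ρ / a) ^ n) := by
        rw [← ENNReal.ofReal_mul (by positivity)]
        congr 1
        rw [Real.div_rpow hρ.le ha.le]
        ring

set_option maxHeartbeats 4000000 in
/-- inequality (3) in the paper: for balls `B_R ⊆ B_Q` and cubes
`T ⊆ S` with `ℓ(S)` comparable to `r(B_Q)` and `S` meeting `B_Q`, and `ℓ(T)` comparable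
to `r(B_R)` and `T` meeting `B_R`, one has `δ(B_R, B_Q) ≤ C (1 + δ(T,S))`, with `C`
depending only on the comparability constant `κ`, `n`, `d` and the dilation constant
`c ≥ 2`. -/
theorem delta_ball_pair_controlled_by_cube_pair (d : ℕ) (n : ℝ) (hn : 0 < n)
    (c : ℝ) (hc : 2 ≤ c) (κ : ℝ) (hκ : 1 ≤ κ) :
    ∃ C : ℝ≥0∞, 0 < C ∧ C ≠ ⊤ ∧
      ∀ μ : Measure (EuclideanSpace ℝ (Fin d)),
        (∀ x ∈ {x : EuclideanSpace ℝ (Fin d) | ∀ ρ > 0, 0 < μ (ball x ρ)},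
          ∀ r > 0, μ (ball x r) ≤ ENNReal.ofReal (r ^ n)) →
        ∀ (xR xQ cT cS : EuclideanSpace ℝ (Fin d)) (rR rQ ℓT ℓS : ℝ),
          0 < rR →
          xR ∈ {x : EuclideanSpace ℝ (Fin d) | ∀ ρ > 0, 0 < μ (ball x ρ)} →
          closedBall xR rR ⊆ closedBall xQ rQ →
          rQ / κ ≤ ℓS → ℓS ≤ κ * rQ →
          (closedBall xQ rQ ∩ cube cS ℓS).Nonempty →
          rR / κ ≤ ℓT → ℓT ≤ κ * rR →
          (cube cT ℓT ∩ closedBall xR rR).Nonempty →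
          cube cT ℓT ⊆ cube cS ℓS →
          ballDelta μ n c xR rR xQ rQ ≤ C * (1 + cubeDelta μ n c cT ℓT cS ℓS) := by
  have hκ0 : 0 < κ := lt_of_lt_of_le one_pos hκ
  have hc0 : 0 < c := lt_of_lt_of_le two_pos hc
  have hs : 0 ≤ Real.sqrt d := Real.sqrt_nonneg d
  obtain ⟨B, hBdef⟩ : ∃ B : ℝ, B = Real.sqrt d * κ / 2 + 1 := ⟨_, rfl⟩
  obtain ⟨L, hLdef⟩ : ∃ L : ℝ, L = B + Real.sqrt d * c * κ / 2 + 1 := ⟨_, rfl⟩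
  have hB1 : 1 ≤ B := by
    rw [hBdef]
    have : 0 ≤ Real.sqrt d * κ / 2 := by positivity
    linarith
  have hBL : B + 1 ≤ L := by
    rw [hLdef]
    have : 0 ≤ Real.sqrt d * c * κ / 2 := by positivity
    linarith
  have hL0 : 0 < L := by linarith
  set K1 : ℝ≥0∞ := ENNReal.ofReal ((8 * (c + 1) * κ * B / c) ^ n) with hK1def
  set K2 : ℝ≥0∞ := ENNReal.ofReal ((2 * L / c) ^ n) with hK2def
  set K3 : ℝ≥0∞ := ENNReal.ofReal ((8 * κ * (c + 1)) ^ n) with hK3def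
  set K4 : ℝ≥0∞ := ENNReal.ofReal ((2 : ℝ) ^ n) with hK4def
  refine ⟨K1 + K2 + K3 + K4 + 1, ?_, ?_, ?_⟩
  · exact lt_of_lt_of_le one_pos le_add_self
  · exact ENNReal.add_ne_top.2 ⟨ENNReal.add_ne_top.2 ⟨ENNReal.add_ne_top.2
      ⟨ENNReal.add_ne_top.2 ⟨ENNReal.ofReal_ne_top, ENNReal.ofReal_ne_top⟩,
        ENNReal.ofReal_ne_top⟩, ENNReal.ofReal_ne_top⟩, ENNReal.one_ne_top⟩
  intro μ hμ xR xQ cT cS rR rQ ℓT ℓS hrR hxR hsub hS1 hS2 _hSQ hT1 hT2 hTR hTS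
  set C : ℝ≥0∞ := K1 + K2 + K3 + K4 + 1 with hCdef
  have hC1 : (1 : ℝ≥0∞) ≤ C := le_add_self
  have hgrow : ∀ r > 0, μ (ball xR r) ≤ ENNReal.ofReal (r ^ n) := hμ xR hxR
  set D : Set (EuclideanSpace ℝ (Fin d)) :=
    closedBall xQ (c * rQ) \ closedBall xR (c * rR) with hDdef
  set I : ℝ≥0∞ := ∫⁻ y in D, ENNReal.ofReal (1 / dist xR y ^ n) ∂μ with hIdef
  set Icube : ℝ≥0∞ := ∫⁻ y in cube cS (c * ℓS) \ cube cT (c * ℓT),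
      ENNReal.ofReal (1 / dist cT y ^ n) ∂μ with hIcubedef
  have hball : ballDelta μ n c xR rR xQ rQ = 1 + I := rfl
  have hcube : cubeDelta μ n c cT ℓT cS ℓS = 1 + Icube := rfl
  have hdxRxQ : dist xR xQ ≤ rQ := by
    have := hsub (mem_closedBall_self hrR.le)
    rwa [mem_closedBall] at this
  have hDlow : ∀ y ∈ D, c * rR ≤ dist xR y := by
    intro y hy
    have := hy.2
    rw [mem_closedBall] at this
    push_neg at this
    rw [dist_comm] at this
    exact this.le
  -- trivial case rQ ≤ 0
  rcases le_or_gt rQ 0 with hrQ | hrQ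
  · have hDempty : D = ∅ := by
      ext y
      simp only [Set.mem_empty_iff_false, iff_false]
      intro hy
      have h1 : dist y xQ ≤ c * rQ := mem_closedBall.mp hy.1
      have h2 : c * rR ≤ dist xR y := hDlow y hy
      have h3 : dist xR y ≤ dist xR xQ + dist xQ y := dist_triangle _ _ _
      rw [dist_comm xQ y] at h3
      have hcr : c * rQ ≤ 0 := mul_nonpos_of_nonneg_of_nonpos hc0.le hrQ
      nlinarith [hrR, hc0]
    have hI0 : I = 0 := by rw [hIdef, hDempty]; simp
    rw [hball, hI0, add_zero]
    calc (1 : ℝ≥0∞) = 1 * 1 := (one_mul 1).symm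
      _ ≤ C * (1 + cubeDelta μ n c cT ℓT cS ℓS) := mul_le_mul' hC1 le_self_add
  -- now rQ > 0
  have hℓT : 0 < ℓT := lt_of_lt_of_le (div_pos hrR hκ0) hT1
  have hℓS : 0 < ℓS := lt_of_lt_of_le (div_pos hrQ hκ0) hS1
  obtain ⟨z, hzT, hzR⟩ := hTR
  have hdTR : dist cT xR ≤ B * rR := by
    have h1 : dist cT z ≤ Real.sqrt d * (ℓT / 2) := by
      rw [dist_comm]; exact dist_le_of_mem_cube hzT hℓT.le
    have h2 : dist z xR ≤ rR := mem_closedBall.mp hzR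
    have h3 : dist cT xR ≤ dist cT z + dist z xR := dist_triangle _ _ _
    have h4 : Real.sqrt d * ℓT ≤ Real.sqrt d * (κ * rR) := by
      apply mul_le_mul_of_nonneg_left hT2 hs
    rw [hBdef]
    nlinarith
  have hDsub : D ⊆ ball xR (2 * (c + 1) * rQ) := by
    intro y hy
    have h1 : dist y xQ ≤ c * rQ := mem_closedBall.mp hy.1
    rw [mem_ball]
    have h3 : dist y xR ≤ dist y xQ + dist xQ xR := dist_triangle _ _ _
    rw [dist_comm xQ xR] at h3
    nlinarith
  have hDmeas : MeasurableSet D := measurableSet_closedBall.diff measurableSet_closedBall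
  by_cases hcase : rQ ≤ 4 * κ * B * rR
  · -- Case 1 : rR comparable to rQ, whole integral bounded
    have hIb : I ≤ ENNReal.ofReal ((2 * (c + 1) * rQ / (c * rR)) ^ n) :=
      annulus_bound μ hn hgrow hDmeas (by positivity) (by positivity) hDsub hDlow
    have hIb2 : I ≤ K1 := by
      refine le_trans hIb ?_
      rw [hK1def]
      apply ENNReal.ofReal_le_ofReal
      apply Real.rpow_le_rpow (by positivity) ?_ hn.le
      rw [div_le_div_iff₀ (by positivity) hc0]
      nlinarith [mul_le_mul_of_nonneg_left hcase (by positivity : (0:ℝ) ≤ 2 * (c + 1) * c)]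
    rw [hball]
    have h14 : K1 ≤ K1 + K2 + K3 + K4 :=
      le_self_add.trans (le_self_add.trans le_self_add)
    calc 1 + I ≤ 1 + K1 := by gcongr
      _ = K1 + 1 := add_comm _ _
      _ ≤ C := by rw [hCdef]; exact add_le_add_left h14 1
      _ = C * 1 := (mul_one C).symm
      _ ≤ C * (1 + cubeDelta μ n c cT ℓT cS ℓS) := mul_le_mul_right le_self_add C
  · -- Case 2
    push_neg at hcase
    have hBrR : B * rR < rQ / (4 * κ) := by
      rw [lt_div_iff₀ (by positivity)]
      nlinarith
    set A1 : Set (EuclideanSpace ℝ (Fin d)) :=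
      closedBall xR (L * rR) \ closedBall xR (c * rR) with hA1def
    set A2 : Set (EuclideanSpace ℝ (Fin d)) :=
      (cube cS (c * ℓS) \ cube cT (c * ℓT)) \ closedBall xR (L * rR) with hA2def
    set A3 : Set (EuclideanSpace ℝ (Fin d)) :=
      closedBall xQ (c * rQ) \ cube cS (c * ℓS) with hA3def
    -- y outside closedBall xR (L rR) and in big cube S' is not in cube T'
    have hnotT : ∀ y : EuclideanSpace ℝ (Fin d), L * rR < dist xR y →
        y ∉ cube cT (c * ℓT) := by
      intro y hy hyT
      have h1 : dist y cT ≤ Real.sqrt d * (c * ℓT / 2) := dist_le_of_mem_cube hyT (by positivity)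
      have h2 : dist xR y ≤ dist xR cT + dist cT y := dist_triangle _ _ _
      rw [dist_comm xR cT] at h2
      rw [dist_comm y cT] at h1
      have h4 : Real.sqrt d * (c * ℓT / 2) ≤ Real.sqrt d * c * κ / 2 * rR := by
        nlinarith [mul_le_mul_of_nonneg_left hT2
          (by positivity : (0:ℝ) ≤ Real.sqrt d * c / 2)]
      rw [hLdef] at hy
      rw [show (B + Real.sqrt d * c * κ / 2 + 1) * rR
          = B * rR + Real.sqrt d * c * κ / 2 * rR + rR from by ring] at hy
      linarith [hdTR, hrR]
    have hcover : D ⊆ A1 ∪ A2 ∪ A3 := by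
      intro y hy
      rcases le_or_gt (dist xR y) (L * rR) with h | h
      · left; left
        exact ⟨by rw [mem_closedBall, dist_comm]; exact h, hy.2⟩
      · by_cases hyS : y ∈ cube cS (c * ℓS)
        · left; right
          refine ⟨⟨hyS, hnotT y h⟩, ?_⟩
          rw [mem_closedBall, dist_comm]
          push_neg
          exact h
        · right
          exact ⟨hy.1, hyS⟩
    have hI1 : (∫⁻ y in A1, ENNReal.ofReal (1 / dist xR y ^ n) ∂μ) ≤ K2 := by
      have hA1meas : MeasurableSet A1 :=
        measurableSet_closedBall.diff measurableSet_closedBall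
      have hA1sub : A1 ⊆ ball xR (2 * L * rR) := by
        intro y hy
        rw [mem_ball]
        have : dist y xR ≤ L * rR := mem_closedBall.mp hy.1
        nlinarith
      have hA1low : ∀ y ∈ A1, c * rR ≤ dist xR y := by
        intro y hy
        have := hy.2
        rw [mem_closedBall] at this
        push_neg at this
        rw [dist_comm] at this
        exact this.le
      have hb := annulus_bound μ hn hgrow hA1meas
        (show (0:ℝ) < c * rR by positivity) (show (0:ℝ) < 2 * L * rR by positivity)
        hA1sub hA1low
      refine le_trans hb ?_
      rw [hK2def]
      apply ENNReal.ofReal_le_ofReal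
      apply Real.rpow_le_rpow (by positivity) ?_ hn.le
      rw [div_le_div_iff₀ (by positivity) hc0]
      have : 2 * L * rR * c = 2 * L * (c * rR) := by ring
      linarith
    have hI3 : (∫⁻ y in A3, ENNReal.ofReal (1 / dist xR y ^ n) ∂μ) ≤ K3 := by
      have hA3low : ∀ y ∈ A3, rQ / (4 * κ) ≤ dist xR y := by
        intro y hy
        have hyS := hy.2
        rw [cube, Set.mem_setOf_eq] at hyS
        push_neg at hyS
        obtain ⟨i, hi⟩ := hyS
        have h1 : c * ℓS / 2 < |y i - cS i| := hi
        have h2 : |cT i - cS i| ≤ ℓS / 2 := by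
          have hcTmem : cT ∈ cube cS ℓS := hTS (fun j => by
            simp only [sub_self, abs_zero]; linarith)
          exact hcTmem i
        have h3 : |cT i - y i| ≤ dist cT y := coord_le_dist cT y i
        have h4 : |y i - cS i| ≤ |y i - cT i| + |cT i - cS i| := by
          calc |y i - cS i| = |(y i - cT i) + (cT i - cS i)| := by congr 1; ring
            _ ≤ |y i - cT i| + |cT i - cS i| := abs_add_le _ _
      -- so dist cT y ≥ cℓS/2 - ℓS/2 ≥ ℓS/2
        have h5 : ℓS / 2 ≤ dist cT y := by
          rw [abs_sub_comm] at h3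
          nlinarith [mul_nonneg (by linarith : (0:ℝ) ≤ c - 2) hℓS.le]
        have h6 : dist cT y ≤ dist cT xR + dist xR y := dist_triangle _ _ _
        have h7 : rQ / (2 * κ) ≤ ℓS / 2 := by
          rw [div_le_div_iff₀ (by positivity) two_pos]
          rw [div_le_iff₀ hκ0] at hS1
          nlinarith
        have h8 : B * rR < rQ / (4 * κ) := hBrR
        have h9 : rQ / (2 * κ) = rQ / (4 * κ) + rQ / (4 * κ) := by ring
        nlinarith [hdTR]
      have hA3sub : A3 ⊆ ball xR (2 * (c + 1) * rQ) := by
        intro y hy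
        have h1 : dist y xQ ≤ c * rQ := mem_closedBall.mp hy.1
        rw [mem_ball]
        have h3 : dist y xR ≤ dist y xQ + dist xQ xR := dist_triangle _ _ _
        rw [dist_comm xQ xR] at h3
        nlinarith
      have hb := annulus_bound μ hn hgrow
        (measurableSet_closedBall.diff (measurableSet_cube cS (c * ℓS)) : MeasurableSet A3)
        (show (0:ℝ) < rQ / (4 * κ) by positivity)
        (show (0:ℝ) < 2 * (c + 1) * rQ by positivity) hA3sub hA3low
      refine le_trans hb ?_
      rw [hK3def]
      have hrQ' : rQ ≠ 0 := ne_of_gt hrQ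
      have hκ' : κ ≠ 0 := ne_of_gt hκ0
      have hbase : 2 * (c + 1) * rQ / (rQ / (4 * κ)) = 8 * κ * (c + 1) := by
        rw [div_div_eq_mul_div, div_eq_iff hrQ']
        ring
      rw [hbase]
    have hI2 : (∫⁻ y in A2, ENNReal.ofReal (1 / dist xR y ^ n) ∂μ) ≤ K4 * Icube := by
      have hA2meas : MeasurableSet A2 :=
        ((measurableSet_cube cS (c * ℓS)).diff (measurableSet_cube cT (c * ℓT))).diff
          measurableSet_closedBall
      calc (∫⁻ y in A2, ENNReal.ofReal (1 / dist xR y ^ n) ∂μ)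
          ≤ ∫⁻ y in A2, K4 * ENNReal.ofReal (1 / dist cT y ^ n) ∂μ := by
            apply setLIntegral_mono' hA2meas
            intro y hy
            have hfar : L * rR < dist xR y := by
              have := hy.2
              rw [mem_closedBall] at this
              push_neg at this
              rwa [dist_comm] at this
            have hxRy : 0 < dist xR y := lt_of_le_of_lt (by positivity) hfar
            have hcTy : dist cT y ≤ 2 * dist xR y := by
              have h1 : dist cT y ≤ dist cT xR + dist xR y := dist_triangle _ _ _
              have h2 : dist cT xR ≤ B * rR := hdTR
              have h3 : B * rR ≤ L * rR :=
                mul_le_mul_of_nonneg_right (by linarith) hrR.le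
              linarith
            have hcTy0 : 0 < dist cT y := by
              have hyT := hy.1.2
              rw [cube, Set.mem_setOf_eq] at hyT
              push_neg at hyT
              obtain ⟨i, hi⟩ := hyT
              have h3 : |cT i - y i| ≤ dist cT y := coord_le_dist cT y i
              rw [abs_sub_comm] at h3
              have : 0 < c * ℓT / 2 := by positivity
              linarith
            rw [hK4def, ← ENNReal.ofReal_mul (by positivity)]
            apply ENNReal.ofReal_le_ofReal
            rw [mul_one_div, div_le_div_iff₀ (by positivity) (by positivity)]
            have hpow : dist cT y ^ n ≤ (2 : ℝ) ^ n * dist xR y ^ n := by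
              rw [← Real.mul_rpow two_pos.le hxRy.le]
              exact Real.rpow_le_rpow hcTy0.le hcTy hn.le
            linarith
        _ ≤ ∫⁻ y in cube cS (c * ℓS) \ cube cT (c * ℓT),
              K4 * ENNReal.ofReal (1 / dist cT y ^ n) ∂μ :=
            lintegral_mono_set Set.diff_subset
        _ = K4 * Icube := lintegral_const_mul' _ _ ENNReal.ofReal_ne_top
    have hIsplit : I ≤ K2 + K4 * Icube + K3 := by
      calc I ≤ ∫⁻ y in A1 ∪ A2 ∪ A3, ENNReal.ofReal (1 / dist xR y ^ n) ∂μ :=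
            lintegral_mono_set hcover
        _ ≤ (∫⁻ y in A1 ∪ A2, ENNReal.ofReal (1 / dist xR y ^ n) ∂μ)
              + ∫⁻ y in A3, ENNReal.ofReal (1 / dist xR y ^ n) ∂μ :=
            lintegral_union_le _ _ _
        _ ≤ ((∫⁻ y in A1, ENNReal.ofReal (1 / dist xR y ^ n) ∂μ)
              + ∫⁻ y in A2, ENNReal.ofReal (1 / dist xR y ^ n) ∂μ)
              + ∫⁻ y in A3, ENNReal.ofReal (1 / dist xR y ^ n) ∂μ := by
            gcongr
            exact lintegral_union_le _ _ _
        _ ≤ (K2 + K4 * Icube) + K3 := by gcongr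
    rw [hball, hcube]
    have hfinal : (1 : ℝ≥0∞) + (K2 + K4 * Icube + K3) ≤ C * (1 + (1 + Icube)) := by
      have h1 : (1 : ℝ≥0∞) + (1 + Icube) = 2 + Icube := by rw [← add_assoc]; norm_num
      rw [h1, mul_add]
      have h2 : (1 : ℝ≥0∞) + (K2 + K4 * Icube + K3) = (1 + K2 + K3) + K4 * Icube := by ring
      rw [h2]
      have hK3C : K3 ≤ C := by
        rw [hCdef]
        exact le_add_self.trans (le_self_add.trans le_self_add)
      have hK4C : K4 ≤ C := by
        rw [hCdef]
        exact le_add_self.trans le_self_add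
      have h12 : (1 : ℝ≥0∞) + K2 ≤ C := by
        rw [hCdef, add_comm (1 : ℝ≥0∞) K2]
        exact add_le_add_left (le_add_self.trans (le_self_add.trans le_self_add)) 1
      apply add_le_add
      · calc (1 : ℝ≥0∞) + K2 + K3 ≤ C + C := add_le_add h12 hK3C
          _ = C * 2 := (mul_two C).symm
      · exact mul_le_mul_left hK4C _
    calc 1 + I ≤ 1 + (K2 + K4 * Icube + K3) := by gcongr
      _ ≤ C * (1 + (1 + Icube)) := hfinal
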